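/- Let R = ℂ[x₁,x₂,x₃,y₁,y₂,y₃] carry the diagonal action of the hyperoctahedral group W = B₃ (signed permutations acting simultaneously on the x's and y's). Let J be the ideal generated by the W-alternating polynomials and I = ⋂_{i}⟨x_i, y_i⟩ ∩ ⋂_{i<j}⟨x_i − x_j, y_i − y_j⟩ ∩ ⋂_{i<j}⟨x_i + x_j, y_i + y_j⟩. Then J ⊆ I but J ≠ I. -/

import Mathlib

open MvPolynomial

/-- The signed permutation `(σ, ε) ∈ B₃ = (ℤ/2)³ ⋊ S₃` acting diagonally on
`ℂ[x₁,x₂,x₃,y₁,y₂,y₃]`: it sends `xᵢ ↦ εᵢ x_{σ(i)}` and `yᵢ ↦ εᵢ y_{σ(i)}`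
(`x`'s indexed by `Sum.inl`, `y`'s by `Sum.inr`). -/
noncomputable def hyperoctAct (σ : Equiv.Perm (Fin 3)) (ε : Fin 3 → ℤˣ) :
    MvPolynomial (Fin 3 ⊕ Fin 3) ℂ →ₐ[ℂ] MvPolynomial (Fin 3 ⊕ Fin 3) ℂ :=
  aeval (Sum.elim (fun i => (((ε i : ℤ) : ℂ)) • X (Sum.inl (σ i)))
    (fun i => (((ε i : ℤ) : ℂ)) • X (Sum.inr (σ i))))

/-- `f` is `B₃`-alternating: `w·f = det(w)·f` for every signed permutation `w = (σ,ε)`,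
where `det(w) = sgn(σ)·∏ εᵢ`. -/
def IsB3Alternating (f : MvPolynomial (Fin 3 ⊕ Fin 3) ℂ) : Prop :=
  ∀ (σ : Equiv.Perm (Fin 3)) (ε : Fin 3 → ℤˣ),
    hyperoctAct σ ε f = ((((Equiv.Perm.sign σ : ℤ) * ∏ i, (ε i : ℤ)) : ℤ) : ℂ) • f

/-- The intersection of codimension-two ideals attached to the positive roots
`xᵢ, xᵢ - xⱼ, xᵢ + xⱼ` of `B₃`. -/
noncomputable def B3rootIdeal : Ideal (MvPolynomial (Fin 3 ⊕ Fin 3) ℂ) :=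
  (⨅ i : Fin 3, Ideal.span {X (Sum.inl i), X (Sum.inr i)}) ⊓
  (⨅ (i : Fin 3) (j : Fin 3) (_ : i < j),
    Ideal.span {X (Sum.inl i) - X (Sum.inl j), X (Sum.inr i) - X (Sum.inr j)}) ⊓
  (⨅ (i : Fin 3) (j : Fin 3) (_ : i < j),
    Ideal.span {X (Sum.inl i) + X (Sum.inl j), X (Sum.inr i) + X (Sum.inr j)})

local notation "RR" => MvPolynomial (Fin 3 ⊕ Fin 3) ℂ

lemma neg_eq_self_zero {a : RR} (h : -a = a) : a = 0 := by
  have h2 : (2:ℂ) • a = 0 := by rw [two_smul]; linear_combination -h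
  rcases smul_eq_zero.mp h2 with h3 | h3
  · norm_num at h3
  · exact h3

lemma alt_mem_ideal (f : RR) (hf : IsB3Alternating f)
    (σ : Equiv.Perm (Fin 3)) (ε : Fin 3 → ℤˣ)
    (hdet : ((Equiv.Perm.sign σ : ℤ) * ∏ i, (ε i : ℤ)) = -1)
    (I : Ideal RR) (g : Fin 3 ⊕ Fin 3 → RR)
    (hg : ∀ k, X k - g k ∈ I)
    (hcom : ∀ k, aeval g (hyperoctAct σ ε (X k)) = g k) :
    f ∈ I := by
  have h1 : (aeval g).comp (hyperoctAct σ ε) = (aeval g : RR →ₐ[ℂ] RR) := by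
    apply MvPolynomial.algHom_ext
    intro k
    simpa using hcom k
  have h3 : aeval g (hyperoctAct σ ε f) = aeval g f := AlgHom.congr_fun h1 f
  rw [hf σ ε, hdet] at h3
  have h2 : aeval g f = 0 := by
    apply neg_eq_self_zero
    simpa using h3
  have hq : (Ideal.Quotient.mkₐ ℂ I).comp (aeval g) = Ideal.Quotient.mkₐ ℂ I := by
    apply MvPolynomial.algHom_ext
    intro k
    simp only [AlgHom.comp_apply, aeval_X, Ideal.Quotient.mkₐ_eq_mk]
    exact (Ideal.Quotient.mk_eq_mk_iff_sub_mem _ _).mpr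
      (by simpa using I.neg_mem (hg k))
  have h4 : Ideal.Quotient.mk I (aeval g f) = Ideal.Quotient.mk I f := by
    have := AlgHom.congr_fun hq f
    simpa using this
  have h5 : aeval g f - f ∈ I := (Ideal.Quotient.mk_eq_mk_iff_sub_mem _ _).mp h4
  rw [h2, zero_sub] at h5
  simpa using I.neg_mem h5

lemma prod_flip (i : Fin 3) :
    (∏ j, (((if j = i then (-1 : ℤˣ) else 1) : ℤˣ) : ℤ)) = -1 := by
  have h : (fun j => (((if j = i then (-1 : ℤˣ) else 1) : ℤˣ) : ℤ))
      = fun j => if j = i then (-1 : ℤ) else 1 := by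
    funext j; split <;> simp
  rw [h, Finset.prod_ite_eq']
  simp

lemma prod_flip2 {i j : Fin 3} (hij : i ≠ j) :
    (∏ k, (((if k = i then (-1 : ℤˣ) else if k = j then -1 else 1) : ℤˣ) : ℤ)) = 1 := by
  rw [← Finset.mul_prod_erase Finset.univ _ (Finset.mem_univ i)]
  rw [← Finset.mul_prod_erase _ _ (Finset.mem_erase.mpr ⟨Ne.symm hij, Finset.mem_univ j⟩)]
  rw [Finset.prod_eq_one]
  · simp [hij.symm]
  · intro k hk
    simp only [Finset.mem_erase] at hk
    simp [hk.1, hk.2.1]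

lemma alt_mem_B3rootIdeal (f : RR) (hf : IsB3Alternating f) : f ∈ B3rootIdeal := by
  refine Submodule.mem_inf.mpr ⟨Submodule.mem_inf.mpr ⟨?_, ?_⟩, ?_⟩
  · refine (Submodule.mem_iInf _).mpr fun i => ?_
    refine alt_mem_ideal f hf 1 (fun j => if j = i then -1 else 1)
      (by rw [Equiv.Perm.sign_one]; simpa using prod_flip i) _
      (fun k => if k = Sum.inl i then 0 else if k = Sum.inr i then 0 else X k) ?_ ?_
    · intro k
      by_cases h1 : k = Sum.inl i
      · subst h1; exact Ideal.mem_span_pair.mpr ⟨1, 0, by simp⟩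
      by_cases h2 : k = Sum.inr i
      · subst h2; exact Ideal.mem_span_pair.mpr ⟨0, 1, by simp⟩
      · exact Ideal.mem_span_pair.mpr ⟨0, 0, by simp [h1, h2]⟩
    · rintro (a | a) <;>
        simp only [hyperoctAct, aeval_X, Sum.elim_inl, Sum.elim_inr, Equiv.Perm.coe_one,
          id_eq, map_smul] <;>
        by_cases h : a = i
      · subst h; simp
      · simp [h]
      · subst h; simp
      · simp [h]
  · refine (Submodule.mem_iInf _).mpr fun i => (Submodule.mem_iInf _).mpr fun j =>
      (Submodule.mem_iInf _).mpr fun hij => ?_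
    refine alt_mem_ideal f hf (Equiv.swap i j) (fun _ => 1)
      (by rw [Equiv.Perm.sign_swap hij.ne]; simp) _
      (fun k => if k = Sum.inl j then X (Sum.inl i)
        else if k = Sum.inr j then X (Sum.inr i) else X k) ?_ ?_
    · intro k
      by_cases h1 : k = Sum.inl j
      · subst h1; exact Ideal.mem_span_pair.mpr ⟨-1, 0, by simp⟩
      by_cases h2 : k = Sum.inr j
      · subst h2; exact Ideal.mem_span_pair.mpr ⟨0, -1, by simp⟩
      · exact Ideal.mem_span_pair.mpr ⟨0, 0, by simp [h1, h2]⟩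
    · have hij' := hij.ne
      rintro (a | a) <;>
        simp only [hyperoctAct, aeval_X, Sum.elim_inl, Sum.elim_inr, map_smul,
          Units.val_one, Int.cast_one, one_smul]
      · rcases eq_or_ne a i with rfl | hai
        · rw [Equiv.swap_apply_left]; simp [hij', hij'.symm]
        rcases eq_or_ne a j with rfl | haj
        · rw [Equiv.swap_apply_right]; simp [hij', hij'.symm]
        · rw [Equiv.swap_apply_of_ne_of_ne hai haj]
      · rcases eq_or_ne a i with rfl | hai
        · rw [Equiv.swap_apply_left]; simp [hij', hij'.symm]
        rcases eq_or_ne a j with rfl | haj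
        · rw [Equiv.swap_apply_right]; simp [hij', hij'.symm]
        · rw [Equiv.swap_apply_of_ne_of_ne hai haj]
  · refine (Submodule.mem_iInf _).mpr fun i => (Submodule.mem_iInf _).mpr fun j =>
      (Submodule.mem_iInf _).mpr fun hij => ?_
    refine alt_mem_ideal f hf (Equiv.swap i j)
      (fun k => if k = i then -1 else if k = j then -1 else 1)
      (by rw [Equiv.Perm.sign_swap hij.ne]; rw [prod_flip2 hij.ne]; simp) _
      (fun k => if k = Sum.inl j then -X (Sum.inl i)
        else if k = Sum.inr j then -X (Sum.inr i) else X k) ?_ ?_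
    · intro k
      by_cases h1 : k = Sum.inl j
      · subst h1; exact Ideal.mem_span_pair.mpr ⟨1, 0, by simp; ring⟩
      by_cases h2 : k = Sum.inr j
      · subst h2; exact Ideal.mem_span_pair.mpr ⟨0, 1, by simp; ring⟩
      · exact Ideal.mem_span_pair.mpr ⟨0, 0, by simp [h1, h2]⟩
    · have hij' := hij.ne
      rintro (a | a) <;>
        simp only [hyperoctAct, aeval_X, Sum.elim_inl, Sum.elim_inr, map_smul]
      · rcases eq_or_ne a i with rfl | hai
        · rw [Equiv.swap_apply_left]; simp [hij', hij'.symm]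
        rcases eq_or_ne a j with rfl | haj
        · rw [Equiv.swap_apply_right]; simp [hij', hij'.symm]
        · rw [Equiv.swap_apply_of_ne_of_ne hai haj]; simp [hai, haj]
      · rcases eq_or_ne a i with rfl | hai
        · rw [Equiv.swap_apply_left]; simp [hij', hij'.symm]
        rcases eq_or_ne a j with rfl | haj
        · rw [Equiv.swap_apply_right]; simp [hij', hij'.symm]
        · rw [Equiv.swap_apply_of_ne_of_ne hai haj]; simp [hai, haj]

lemma coeff_eq_zero_of_neg {c : ℂ} (h : -c = c) : c = 0 := by linear_combination -h/2

lemma my_prod_smul {ι : Type*} (s : Finset ι) (b : ι → ℂ) (f : ι → RR) :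
    ∏ i ∈ s, b i • f i = (∏ i ∈ s, b i) • ∏ i ∈ s, f i := by
  classical
  induction s using Finset.induction with
  | empty => simp
  | @insert _ _ h ih => rw [Finset.prod_insert h, Finset.prod_insert h, Finset.prod_insert h, ih,
      smul_mul_smul_comm]

lemma aeval_diag_monomial (c : Fin 3 ⊕ Fin 3 → ℂ) (m : (Fin 3 ⊕ Fin 3) →₀ ℕ) (a : ℂ) :
    aeval (fun k => c k • X k) (monomial m a) =
      (m.prod fun k n => c k ^ n) • (monomial m a : RR) := by
  rw [aeval_monomial]
  have h : (m.prod fun k n => ((c k • X k : RR)) ^ n)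
      = (m.prod fun k n => c k ^ n) • m.prod fun k n => (X k : RR) ^ n := by
    rw [Finsupp.prod, Finsupp.prod, Finsupp.prod, ← my_prod_smul]
    exact Finset.prod_congr rfl fun k _ => smul_pow _ _ _
  rw [h, monomial_eq, algebraMap_eq, mul_smul_comm]

lemma coeff_aeval_diag (c : Fin 3 ⊕ Fin 3 → ℂ) (f : RR) (m : (Fin 3 ⊕ Fin 3) →₀ ℕ) :
    coeff m (aeval (fun k => c k • X k) f) = (m.prod fun k n => c k ^ n) * coeff m f := by
  induction f using MvPolynomial.induction_on' with
  | monomial m' a =>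
    rw [aeval_diag_monomial, coeff_smul, coeff_monomial]
    split
    · next h => subst h; simp [smul_eq_mul]
    · simp
  | add p q hp hq => rw [map_add, coeff_add, coeff_add, hp, hq]; ring

/-- (P1) flip-parity vanishing -/
lemma alt_coeff_even (f : RR) (hf : IsB3Alternating f) (i : Fin 3)
    (m : (Fin 3 ⊕ Fin 3) →₀ ℕ) (hm : Even (m (Sum.inl i) + m (Sum.inr i))) :
    coeff m f = 0 := by
  set ε : Fin 3 → ℤˣ := fun j => if j = i then -1 else 1 with hε
  set c : Fin 3 ⊕ Fin 3 → ℂ := Sum.elim (fun a => ((ε a : ℤ) : ℂ)) (fun a => ((ε a : ℤ) : ℂ)) with hc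
  have hact : hyperoctAct 1 ε = (aeval (fun k => c k • X k) : RR →ₐ[ℂ] RR) := by
    apply MvPolynomial.algHom_ext
    rintro (a | a) <;> simp [hyperoctAct, hc]
  have h1 := hf 1 ε
  rw [hact] at h1
  have h2 := congrArg (coeff m) h1
  rw [coeff_aeval_diag, coeff_smul, Equiv.Perm.sign_one, prod_flip i] at h2
  have hprod : (m.prod fun k n => c k ^ n) = 1 := by
    rw [Finsupp.prod_fintype _ _ (fun k => pow_zero _), Fintype.prod_sum_type]
    have hl : ∀ a : Fin 3, (c (Sum.inl a)) ^ m (Sum.inl a)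
        = if a = i then (-1 : ℂ) ^ m (Sum.inl a) else 1 := by
      intro a; by_cases h : a = i <;> simp [hc, hε, h]
    have hr : ∀ a : Fin 3, (c (Sum.inr a)) ^ m (Sum.inr a)
        = if a = i then (-1 : ℂ) ^ m (Sum.inr a) else 1 := by
      intro a; by_cases h : a = i <;> simp [hc, hε, h]
    rw [Finset.prod_congr rfl (fun a _ => hl a), Finset.prod_congr rfl (fun a _ => hr a),
      Finset.prod_ite_eq', Finset.prod_ite_eq']
    simp only [Finset.mem_univ, if_true]
    rw [← pow_add]
    exact hm.neg_one_pow
  rw [hprod, one_mul] at h2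
  have h3 : -coeff m f = coeff m f := by
    conv_rhs => rw [h2]
    simp
  exact coeff_eq_zero_of_neg h3

lemma hyperoct_perm_eq_rename (σ : Equiv.Perm (Fin 3)) :
    hyperoctAct σ (fun _ => 1) = (rename (Sum.map σ σ) : RR →ₐ[ℂ] RR) := by
  apply MvPolynomial.algHom_ext
  rintro (a | a) <;> simp [hyperoctAct]

/-- (P2) swap-symmetric monomial vanishing -/
lemma alt_coeff_swap (f : RR) (hf : IsB3Alternating f) (i j : Fin 3) (hij : i ≠ j)
    (m : (Fin 3 ⊕ Fin 3) →₀ ℕ)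
    (h1 : m (Sum.inl i) = m (Sum.inl j)) (h2 : m (Sum.inr i) = m (Sum.inr j)) :
    coeff m f = 0 := by
  set e : Fin 3 ⊕ Fin 3 → Fin 3 ⊕ Fin 3 := Sum.map (Equiv.swap i j) (Equiv.swap i j) with he
  have hinj : Function.Injective e := by
    have : e = ⇑(Equiv.sumCongr (Equiv.swap i j) (Equiv.swap i j)) := by
      funext k; rcases k with a | a <;> simp [he]
    rw [this]
    exact (Equiv.sumCongr (Equiv.swap i j) (Equiv.swap i j)).injective
  have hval : ∀ a : Fin 3, m (Sum.inl (Equiv.swap i j a)) = m (Sum.inl a) ∧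
      m (Sum.inr (Equiv.swap i j a)) = m (Sum.inr a) := by
    intro a
    rcases eq_or_ne a i with rfl | hai
    · rw [Equiv.swap_apply_left]; exact ⟨h1.symm, h2.symm⟩
    rcases eq_or_ne a j with rfl | haj
    · rw [Equiv.swap_apply_right]; exact ⟨h1, h2⟩
    · rw [Equiv.swap_apply_of_ne_of_ne hai haj]; exact ⟨rfl, rfl⟩
  have hmd : Finsupp.mapDomain e m = m := by
    ext k
    obtain ⟨k', rfl⟩ : ∃ k', e k' = k := by
      refine ⟨(Equiv.sumCongr (Equiv.swap i j) (Equiv.swap i j)).symm k, ?_⟩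
      have : ∀ x, e x = (Equiv.sumCongr (Equiv.swap i j) (Equiv.swap i j)) x := by
        intro x; rcases x with a | a <;> simp [he]
      rw [this]; exact Equiv.apply_symm_apply _ _
    rw [Finsupp.mapDomain_apply hinj]
    rcases k' with a | a
    · simp only [he, Sum.map_inl]; exact (hval a).1.symm ▸ rfl
    · simp only [he, Sum.map_inr]; exact (hval a).2.symm ▸ rfl
  have h3 := hf (Equiv.swap i j) (fun _ => 1)
  rw [hyperoct_perm_eq_rename] at h3
  have h4 := MvPolynomial.coeff_rename_mapDomain e hinj f m
  rw [hmd, h3, coeff_smul, Equiv.Perm.sign_swap hij] at h4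
  have h5 : -coeff m f = coeff m f := by
    conv_rhs => rw [← h4]
    simp
  exact coeff_eq_zero_of_neg h5

noncomputable def m0 : (Fin 3 ⊕ Fin 3) →₀ ℕ :=
  Finsupp.single (Sum.inl 0) 2 + Finsupp.single (Sum.inl 1) 1 +
  Finsupp.single (Sum.inr 1) 1 + Finsupp.single (Sum.inr 2) 2

lemma m0_inl0 : m0 (Sum.inl 0) = 2 := by simp [m0, Finsupp.single_apply]
lemma m0_inl1 : m0 (Sum.inl 1) = 1 := by simp [m0, Finsupp.single_apply]
lemma m0_inl2 : m0 (Sum.inl 2) = 0 := by simp [m0, Finsupp.single_apply]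
lemma m0_inr0 : m0 (Sum.inr 0) = 0 := by simp [m0, Finsupp.single_apply]
lemma m0_inr1 : m0 (Sum.inr 1) = 1 := by simp [m0, Finsupp.single_apply]
lemma m0_inr2 : m0 (Sum.inr 2) = 2 := by simp [m0, Finsupp.single_apply]

/-- any sub-monomial of m0 has zero coefficient in an alternating polynomial -/
lemma alt_coeff_sub_m0 (f : RR) (hf : IsB3Alternating f)
    (m1 m : (Fin 3 ⊕ Fin 3) →₀ ℕ) (hsum : m1 + m = m0) : coeff m f = 0 := by
  have hval : ∀ k, m1 k + m k = m0 k := by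
    intro k
    have := DFunLike.congr_fun hsum k
    simpa using this
  have e0 := hval (Sum.inl 0); rw [m0_inl0] at e0
  have e1 := hval (Sum.inl 1); rw [m0_inl1] at e1
  have e2 := hval (Sum.inl 2); rw [m0_inl2] at e2
  have f0 := hval (Sum.inr 0); rw [m0_inr0] at f0
  have f1 := hval (Sum.inr 1); rw [m0_inr1] at f1
  have f2 := hval (Sum.inr 2); rw [m0_inr2] at f2
  rcases Nat.even_or_odd (m (Sum.inl 0) + m (Sum.inr 0)) with he | ho
  · exact alt_coeff_even f hf 0 m he
  obtain ⟨t0, ht0⟩ := ho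
  rcases Nat.even_or_odd (m (Sum.inl 2) + m (Sum.inr 2)) with he | ho
  · exact alt_coeff_even f hf 2 m he
  obtain ⟨t2, ht2⟩ := ho
  rcases Nat.even_or_odd (m (Sum.inl 1) + m (Sum.inr 1)) with he | ho
  · exact alt_coeff_even f hf 1 m he
  obtain ⟨t1, ht1⟩ := ho
  -- now: m (inl 0) = 1, m (inr 0) = 0, m (inl 2) = 0, m (inr 2) = 1,
  --      m (inl 1) + m (inr 1) = 1
  rcases (by omega : m (Sum.inl 1) = 1 ∧ m (Sum.inr 1) = 0 ∨
      m (Sum.inl 1) = 0 ∧ m (Sum.inr 1) = 1) with ⟨hb, hc⟩ | ⟨hb, hc⟩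
  · exact alt_coeff_swap f hf 0 1 (by decide) m (by omega) (by omega)
  · exact alt_coeff_swap f hf 1 2 (by decide) m (by omega) (by omega)

noncomputable def Kid : Ideal RR where
  carrier := {p | ∀ q : RR, coeff m0 (q * p) = 0}
  add_mem' := fun {a b} ha hb q => by rw [mul_add, coeff_add, ha q, hb q, add_zero]
  zero_mem' := fun q => by rw [mul_zero, coeff_zero]
  smul_mem' := fun c p hp q => by
    rw [smul_eq_mul, ← mul_assoc]; exact hp (q * c)

lemma alt_mem_Kid (f : RR) (hf : IsB3Alternating f) : f ∈ Kid := by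
  intro q
  rw [coeff_mul]
  apply Finset.sum_eq_zero
  rintro ⟨m1, m2⟩ hmem
  rw [alt_coeff_sub_m0 f hf m1 m2 (Finset.HasAntidiagonal.mem_antidiagonal.mp hmem), mul_zero]

noncomputable def Dwit : RR :=
  (X (Sum.inl 0) * X (Sum.inr 1) - X (Sum.inl 1) * X (Sum.inr 0)) *
  (X (Sum.inl 0) * X (Sum.inr 2) - X (Sum.inl 2) * X (Sum.inr 0)) *
  (X (Sum.inl 1) * X (Sum.inr 2) - X (Sum.inl 2) * X (Sum.inr 1))


lemma Dwit_mem : Dwit ∈ B3rootIdeal := by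
  have d01 : ∀ I : Ideal RR,
      (X (Sum.inl 0) * X (Sum.inr 1) - X (Sum.inl 1) * X (Sum.inr 0) : RR) ∈ I →
      Dwit ∈ I := fun I h => Ideal.mul_mem_right _ _ (Ideal.mul_mem_right _ _ h)
  have d02 : ∀ I : Ideal RR,
      (X (Sum.inl 0) * X (Sum.inr 2) - X (Sum.inl 2) * X (Sum.inr 0) : RR) ∈ I →
      Dwit ∈ I := fun I h => Ideal.mul_mem_right _ _ (Ideal.mul_mem_left _ _ h)
  have d12 : ∀ I : Ideal RR,
      (X (Sum.inl 1) * X (Sum.inr 2) - X (Sum.inl 2) * X (Sum.inr 1) : RR) ∈ I →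
      Dwit ∈ I := fun I h => Ideal.mul_mem_left _ _ h
  refine Submodule.mem_inf.mpr ⟨Submodule.mem_inf.mpr ⟨?_, ?_⟩, ?_⟩
  · refine (Submodule.mem_iInf _).mpr fun i => ?_
    fin_cases i
    · refine d01 _ ?_
      show _ ∈ Ideal.span {(X (Sum.inl 0) : RR), X (Sum.inr 0)}
      exact Ideal.mem_span_pair.mpr ⟨X (Sum.inr 1), -X (Sum.inl 1), by ring⟩
    · refine d01 _ ?_
      show _ ∈ Ideal.span {(X (Sum.inl 1) : RR), X (Sum.inr 1)}
      exact Ideal.mem_span_pair.mpr ⟨-X (Sum.inr 0), X (Sum.inl 0), by ring⟩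
    · refine d12 _ ?_
      show _ ∈ Ideal.span {(X (Sum.inl 2) : RR), X (Sum.inr 2)}
      exact Ideal.mem_span_pair.mpr ⟨-X (Sum.inr 1), X (Sum.inl 1), by ring⟩
  · refine (Submodule.mem_iInf _).mpr fun i => (Submodule.mem_iInf _).mpr fun j =>
      (Submodule.mem_iInf _).mpr fun hij => ?_
    fin_cases i <;> fin_cases j
    · exact absurd hij (by decide)
    · refine d01 _ ?_
      show _ ∈ Ideal.span {(X (Sum.inl 0) - X (Sum.inl 1) : RR), X (Sum.inr 0) - X (Sum.inr 1)}
      exact Ideal.mem_span_pair.mpr ⟨X (Sum.inr 1), -X (Sum.inl 1), by ring⟩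
    · refine d02 _ ?_
      show _ ∈ Ideal.span {(X (Sum.inl 0) - X (Sum.inl 2) : RR), X (Sum.inr 0) - X (Sum.inr 2)}
      exact Ideal.mem_span_pair.mpr ⟨X (Sum.inr 2), -X (Sum.inl 2), by ring⟩
    · exact absurd hij (by decide)
    · exact absurd hij (by decide)
    · refine d12 _ ?_
      show _ ∈ Ideal.span {(X (Sum.inl 1) - X (Sum.inl 2) : RR), X (Sum.inr 1) - X (Sum.inr 2)}
      exact Ideal.mem_span_pair.mpr ⟨X (Sum.inr 2), -X (Sum.inl 2), by ring⟩
    · exact absurd hij (by decide)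
    · exact absurd hij (by decide)
    · exact absurd hij (by decide)
  · refine (Submodule.mem_iInf _).mpr fun i => (Submodule.mem_iInf _).mpr fun j =>
      (Submodule.mem_iInf _).mpr fun hij => ?_
    fin_cases i <;> fin_cases j
    · exact absurd hij (by decide)
    · refine d01 _ ?_
      show _ ∈ Ideal.span {(X (Sum.inl 0) + X (Sum.inl 1) : RR), X (Sum.inr 0) + X (Sum.inr 1)}
      exact Ideal.mem_span_pair.mpr ⟨X (Sum.inr 1), -X (Sum.inl 1), by ring⟩
    · refine d02 _ ?_
      show _ ∈ Ideal.span {(X (Sum.inl 0) + X (Sum.inl 2) : RR), X (Sum.inr 0) + X (Sum.inr 2)}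
      exact Ideal.mem_span_pair.mpr ⟨X (Sum.inr 2), -X (Sum.inl 2), by ring⟩
    · exact absurd hij (by decide)
    · exact absurd hij (by decide)
    · refine d12 _ ?_
      show _ ∈ Ideal.span {(X (Sum.inl 1) + X (Sum.inl 2) : RR), X (Sum.inr 1) + X (Sum.inr 2)}
      exact Ideal.mem_span_pair.mpr ⟨X (Sum.inr 2), -X (Sum.inl 2), by ring⟩
    · exact absurd hij (by decide)
    · exact absurd hij (by decide)
    · exact absurd hij (by decide)

lemma coeff_m0_Dwit : coeff m0 Dwit = 1 := by
  have hexp : Dwit =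
      X (Sum.inl 0)^2 * X (Sum.inl 1)^1 * X (Sum.inr 1)^1 * X (Sum.inr 2)^2
    + X (Sum.inl 1)^2 * X (Sum.inl 2)^1 * X (Sum.inr 0)^2 * X (Sum.inr 2)^1
    + X (Sum.inl 0)^1 * X (Sum.inl 2)^2 * X (Sum.inr 0)^1 * X (Sum.inr 1)^2
    - X (Sum.inl 1)^1 * X (Sum.inl 2)^2 * X (Sum.inr 0)^2 * X (Sum.inr 1)^1
    - X (Sum.inl 0)^1 * X (Sum.inl 1)^2 * X (Sum.inr 0)^1 * X (Sum.inr 2)^2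
    - X (Sum.inl 0)^2 * X (Sum.inl 2)^1 * X (Sum.inr 1)^2 * X (Sum.inr 2)^1 := by
    rw [Dwit]; ring
  have ca : coeff m0 (X (Sum.inl 0)^2 * X (Sum.inl 1)^1 * X (Sum.inr 1)^1 * X (Sum.inr 2)^2 : RR) = 1 := by
    rw [show (X (Sum.inl 0)^2 * X (Sum.inl 1)^1 * X (Sum.inr 1)^1 * X (Sum.inr 2)^2 : RR)
        = monomial m0 1 from by simp only [m0, X_pow_eq_monomial, monomial_mul, one_mul, mul_one]]
    rw [coeff_monomial, if_pos rfl]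
  have cb : coeff m0 (X (Sum.inl 1)^2 * X (Sum.inl 2)^1 * X (Sum.inr 0)^2 * X (Sum.inr 2)^1 : RR) = 0 := by
    rw [show (X (Sum.inl 1)^2 * X (Sum.inl 2)^1 * X (Sum.inr 0)^2 * X (Sum.inr 2)^1 : RR)
        = monomial (Finsupp.single (Sum.inl 1) 2 + Finsupp.single (Sum.inl 2) 1
          + Finsupp.single (Sum.inr 0) 2 + Finsupp.single (Sum.inr 2) 1) 1 from by
        simp only [X_pow_eq_monomial, monomial_mul, one_mul, mul_one]]
    rw [coeff_monomial, if_neg]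
    intro h
    have := DFunLike.congr_fun h (Sum.inl 0)
    simp [m0, Finsupp.single_apply] at this
  have cc : coeff m0 (X (Sum.inl 0)^1 * X (Sum.inl 2)^2 * X (Sum.inr 0)^1 * X (Sum.inr 1)^2 : RR) = 0 := by
    rw [show (X (Sum.inl 0)^1 * X (Sum.inl 2)^2 * X (Sum.inr 0)^1 * X (Sum.inr 1)^2 : RR)
        = monomial (Finsupp.single (Sum.inl 0) 1 + Finsupp.single (Sum.inl 2) 2
          + Finsupp.single (Sum.inr 0) 1 + Finsupp.single (Sum.inr 1) 2) 1 from by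
        simp only [X_pow_eq_monomial, monomial_mul, one_mul, mul_one]]
    rw [coeff_monomial, if_neg]
    intro h
    have := DFunLike.congr_fun h (Sum.inl 0)
    simp [m0, Finsupp.single_apply] at this
  have cd : coeff m0 (X (Sum.inl 1)^1 * X (Sum.inl 2)^2 * X (Sum.inr 0)^2 * X (Sum.inr 1)^1 : RR) = 0 := by
    rw [show (X (Sum.inl 1)^1 * X (Sum.inl 2)^2 * X (Sum.inr 0)^2 * X (Sum.inr 1)^1 : RR)
        = monomial (Finsupp.single (Sum.inl 1) 1 + Finsupp.single (Sum.inl 2) 2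
          + Finsupp.single (Sum.inr 0) 2 + Finsupp.single (Sum.inr 1) 1) 1 from by
        simp only [X_pow_eq_monomial, monomial_mul, one_mul, mul_one]]
    rw [coeff_monomial, if_neg]
    intro h
    have := DFunLike.congr_fun h (Sum.inl 0)
    simp [m0, Finsupp.single_apply] at this
  have ce : coeff m0 (X (Sum.inl 0)^1 * X (Sum.inl 1)^2 * X (Sum.inr 0)^1 * X (Sum.inr 2)^2 : RR) = 0 := by
    rw [show (X (Sum.inl 0)^1 * X (Sum.inl 1)^2 * X (Sum.inr 0)^1 * X (Sum.inr 2)^2 : RR)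
        = monomial (Finsupp.single (Sum.inl 0) 1 + Finsupp.single (Sum.inl 1) 2
          + Finsupp.single (Sum.inr 0) 1 + Finsupp.single (Sum.inr 2) 2) 1 from by
        simp only [X_pow_eq_monomial, monomial_mul, one_mul, mul_one]]
    rw [coeff_monomial, if_neg]
    intro h
    have := DFunLike.congr_fun h (Sum.inl 0)
    simp [m0, Finsupp.single_apply] at this
  have cf : coeff m0 (X (Sum.inl 0)^2 * X (Sum.inl 2)^1 * X (Sum.inr 1)^2 * X (Sum.inr 2)^1 : RR) = 0 := by
    rw [show (X (Sum.inl 0)^2 * X (Sum.inl 2)^1 * X (Sum.inr 1)^2 * X (Sum.inr 2)^1 : RR)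
        = monomial (Finsupp.single (Sum.inl 0) 2 + Finsupp.single (Sum.inl 2) 1
          + Finsupp.single (Sum.inr 1) 2 + Finsupp.single (Sum.inr 2) 1) 1 from by
        simp only [X_pow_eq_monomial, monomial_mul, one_mul, mul_one]]
    rw [coeff_monomial, if_neg]
    intro h
    have := DFunLike.congr_fun h (Sum.inl 1)
    simp [m0, Finsupp.single_apply] at this
  rw [hexp]
  simp only [coeff_add, coeff_sub]
  rw [ca, cb, cc, cd, ce, cf]
  norm_num

/-- In type `B₃`, the ideal `J` generated by the `W`-alternating polynomials is strictly
contained in the intersection `I` of the codimension-two root ideals: `J ⊆ I` but `J ≠ I`. -/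
theorem stmt10 :
    Ideal.span {f : MvPolynomial (Fin 3 ⊕ Fin 3) ℂ | IsB3Alternating f} ≤ B3rootIdeal ∧
    Ideal.span {f : MvPolynomial (Fin 3 ⊕ Fin 3) ℂ | IsB3Alternating f} ≠ B3rootIdeal := by
  have hJK : Ideal.span {f : MvPolynomial (Fin 3 ⊕ Fin 3) ℂ | IsB3Alternating f} ≤ Kid :=
    Ideal.span_le.mpr fun f hf => alt_mem_Kid f hf
  constructor
  · exact Ideal.span_le.mpr fun f hf => alt_mem_B3rootIdeal f hf
  · intro h
    have hD : Dwit ∈ Ideal.span {f : MvPolynomial (Fin 3 ⊕ Fin 3) ℂ | IsB3Alternating f} := by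
      rw [h]; exact Dwit_mem
    have hco := hJK hD 1
    rw [one_mul, coeff_m0_Dwit] at hco
    exact one_ne_zero hco
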